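/- Let V be a finite-dimensional real inner product space, W a finite group acting on V by linear isometries, ε : W → {±1} a group homomorphism, h a positive integer, and Λ a lattice in V with w(Λ) = Λ for all w ∈ W. Let M be a finite W-invariant multiset of elements of Λ^∨ and a, b ∈ Λ^∨, and define f(ν) = ∑_{j ∈ M} ∑_{w₁, w₂ ∈ W} ε(w₁) ε(w₂) e^{−2πi (j + w₁(a) − w₂(b), ν)/h}. If ν ∈ V satisfies w₀(ν) + hβ = ν for some w₀ ∈ W and β ∈ Λ with ε(w₀) = −1, then f(ν) = 0. -/

import Mathlib

open scoped RealInnerProductSpace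
open Complex

lemma inner_isom_symm {V : Type*} [NormedAddCommGroup V] [InnerProductSpace ℝ V]
    (e : V ≃ₗᵢ[ℝ] V) (x y : V) : ⟪e x, y⟫ = ⟪x, e.symm y⟫ := by
  conv_lhs => rw [← e.apply_symm_apply y]
  exact e.inner_map_map x (e.symm y)

/-- Let `V` be a finite-dimensional real inner product space, `W` a finite group acting
on `V` by linear isometries (via `ρ`), `ε : W → {±1}` a group homomorphism, `h` a
positive integer, and `Λ` a lattice in `V` (the `ℤ`-span of an `ℝ`-basis `b`) with
`w(Λ) = Λ` for all `w ∈ W`.  Let `M` be a finite multiset of elements of `Λ^∨` invariant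
(with multiplicities) under `W`, and let `a, b ∈ Λ^∨`.  Define
`f(ν) = ∑_{j ∈ M} ∑_{w₁, w₂ ∈ W} ε(w₁) ε(w₂) e^{−2πi (j + w₁ a − w₂ b, ν)/h}`.
If `ν ∈ V` satisfies `w₀ ν + h β = ν` for some `w₀ ∈ W` and `β ∈ Λ` with `ε(w₀) = −1`,
then `f(ν) = 0`. -/
theorem twisted_fusion_function_vanishes_on_boundary
    {V : Type*} [NormedAddCommGroup V] [InnerProductSpace ℝ V] [FiniteDimensional ℝ V]
    {ι : Type*} [Fintype ι] (bV : Module.Basis ι ℝ V)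
    {W : Type*} [Group W] [Fintype W]
    (ρ : W →* (V ≃ₗᵢ[ℝ] V)) (ε : W →* ℤˣ)
    (h : ℕ) (hh : 0 < h)
    (Λ : Submodule ℤ V) (hΛ : Λ = Submodule.span ℤ (Set.range bV))
    (hinv : ∀ (w : W) (v : V), v ∈ Λ ↔ ρ w v ∈ Λ)
    (M : Multiset V) (hM : ∀ j ∈ M, ∀ y ∈ Λ, ∃ n : ℤ, ⟪j, y⟫ = (n : ℝ))
    (hMinv : ∀ w : W, M.map (⇑(ρ w)) = M)
    (a b : V) (ha : ∀ y ∈ Λ, ∃ n : ℤ, ⟪a, y⟫ = (n : ℝ))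
    (hb : ∀ y ∈ Λ, ∃ n : ℤ, ⟪b, y⟫ = (n : ℝ))
    (f : V → ℂ)
    (hf : ∀ ν : V, f ν = (M.map fun j => ∑ w₁ : W, ∑ w₂ : W,
        ((ε w₁ : ℤ) : ℂ) * ((ε w₂ : ℤ) : ℂ) *
          Complex.exp (-(2 * (Real.pi : ℂ) * Complex.I) *
            (⟪j + ρ w₁ a - ρ w₂ b, ν⟫ : ℂ) / (h : ℂ))).sum) :
    ∀ (w₀ : W) (β : V), β ∈ Λ → ε w₀ = -1 → ∀ ν : V,
      ρ w₀ ν + (h : ℝ) • β = ν → f ν = 0 := by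
  intro w₀ β hβ hε ν hν
  -- β' = (ρ w₀)⁻¹ β ∈ Λ
  have hβ' : (ρ w₀).symm β ∈ Λ := by
    rw [hinv w₀]
    simpa using hβ
  -- (ρ w₀)⁻¹ ν = ν + h • β'
  have hsymmν : (ρ w₀).symm ν = ν + (h : ℝ) • (ρ w₀).symm β := by
    apply (ρ w₀).injective
    simp only [map_add, map_smul, LinearIsometryEquiv.apply_symm_apply]
    exact hν.symm
  rw [hf]
  apply Multiset.sum_eq_zero
  intro x hx
  rw [Multiset.mem_map] at hx
  obtain ⟨j, hj, rfl⟩ := hx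
  rw [Finset.sum_comm]
  apply Finset.sum_eq_zero
  intro w₂ _
  set F : W → ℂ := fun w₁ => ((ε w₁ : ℤ) : ℂ) * ((ε w₂ : ℤ) : ℂ) *
      Complex.exp (-(2 * (Real.pi : ℂ) * Complex.I) *
        (⟪j + ρ w₁ a - ρ w₂ b, ν⟫ : ℂ) / (h : ℂ)) with hF
  have key : ∀ w₁ : W, F (w₀ * w₁) = -F w₁ := by
    intro w₁
    -- integrality
    have hmem : (ρ w₁).symm ((ρ w₀).symm β) ∈ Λ := by
      rw [hinv w₁]
      simpa using hβ'
    obtain ⟨n, hn⟩ := ha _ hmem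
    have hip : ⟪ρ w₁ a, (ρ w₀).symm β⟫ = (n : ℝ) := by
      rw [inner_isom_symm]; exact hn
    -- inner product identity
    have hinner : ⟪j + ρ (w₀ * w₁) a - ρ w₂ b, ν⟫
        = ⟪j + ρ w₁ a - ρ w₂ b, ν⟫ + (h : ℝ) * (n : ℝ) := by
      have h1 : ρ (w₀ * w₁) a = ρ w₀ (ρ w₁ a) := by
        rw [map_mul]; rfl
      rw [h1]
      have h2 : ⟪ρ w₀ (ρ w₁ a), ν⟫ = ⟪ρ w₁ a, ν⟫ + (h : ℝ) * (n : ℝ) := by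
        rw [inner_isom_symm, hsymmν, inner_add_right, real_inner_smul_right, hip]
      simp only [inner_sub_left, inner_add_left, h2]
      ring
    -- exponentials agree
    have hexp : Complex.exp (-(2 * (Real.pi : ℂ) * Complex.I) *
          (⟪j + ρ (w₀ * w₁) a - ρ w₂ b, ν⟫ : ℂ) / (h : ℂ))
        = Complex.exp (-(2 * (Real.pi : ℂ) * Complex.I) *
          (⟪j + ρ w₁ a - ρ w₂ b, ν⟫ : ℂ) / (h : ℂ)) := by
      have hh' : (h : ℂ) ≠ 0 := Nat.cast_ne_zero.mpr hh.ne'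
      rw [hinner]
      push_cast
      rw [show (-(2 * (Real.pi : ℂ) * Complex.I) *
          ((⟪j + ρ w₁ a - ρ w₂ b, ν⟫ : ℝ) + (h : ℂ) * (n : ℂ)) / (h : ℂ))
        = -(2 * (Real.pi : ℂ) * Complex.I) *
          ((⟪j + ρ w₁ a - ρ w₂ b, ν⟫ : ℝ)) / (h : ℂ) + (-n : ℤ) * (2 * Real.pi * Complex.I)
          from by push_cast; field_simp; ring]
      rw [Complex.exp_add, Complex.exp_int_mul_two_pi_mul_I, mul_one]
    -- sign flip
    have hsign : ((ε (w₀ * w₁) : ℤ) : ℂ) = -((ε w₁ : ℤ) : ℂ) := by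
      rw [map_mul, hε]
      push_cast
      ring
    simp only [hF, hexp, hsign]
    ring
  have hbij : Function.Bijective (fun w₁ : W => w₀ * w₁) := Group.mulLeft_bijective w₀
  have hsum : ∑ w₁ : W, F (w₀ * w₁) = ∑ w₁ : W, F w₁ :=
    Fintype.sum_bijective _ hbij _ _ (fun _ => rfl)
  have h2 : ∑ w₁ : W, F w₁ = -∑ w₁ : W, F w₁ := by
    calc ∑ w₁ : W, F w₁ = ∑ w₁ : W, F (w₀ * w₁) := hsum.symm
      _ = ∑ w₁ : W, -F w₁ := by simp only [key]
      _ = -∑ w₁ : W, F w₁ := by rw [Finset.sum_neg_distrib]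
  linear_combination h2 / 2
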